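/- Theorem 1, distance bound: under the CODER iteration with F monotone and satisfying the blockwise Lipschitz assumption, if x⋆ ∈ ℝ^d solves the generalized Minty variational inequality, i.e., ⟨F(x), x − x⋆⟩ + g(x) − g(x⋆) ≥ 0 for all x ∈ ℝ^d, then for every k ≥ 1: ‖x_k − x⋆‖² ≤ (2/(1 + γA_k))‖x₀ − x⋆‖². -/

import Mathlib

open scoped RealInnerProductSpace

/-- Operator norm of a square real matrix, viewed as a linear map on Euclidean space. -/
noncomputable def matOpNorm {d : ℕ} (Q : Matrix (Fin d) (Fin d) ℝ) : ℝ :=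
  ‖Matrix.toEuclideanCLM (𝕜 := ℝ) Q‖

/-- The quadratic form `vᵀ Q v` on Euclidean space. -/
noncomputable def quadForm {d : ℕ} (Q : Matrix (Fin d) (Fin d) ℝ)
    (v : EuclideanSpace ℝ (Fin d)) : ℝ :=
  ⟪v, Matrix.toEuclideanCLM (𝕜 := ℝ) Q v⟫

lemma quadForm_eq {d : ℕ} (Q : Matrix (Fin d) (Fin d) ℝ) (v : EuclideanSpace ℝ (Fin d)) :
    quadForm Q v = ∑ j, ∑ l, v j * (Q j l * v l) := by
  have h : (Matrix.toEuclideanCLM (𝕜 := ℝ) Q v) = Matrix.toEuclideanLin Q v := by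
    rw [← Matrix.coe_toEuclideanCLM_eq_toEuclideanLin]; rfl
  simp [quadForm, PiLp.inner_apply, h, Matrix.toEuclideanLin_apply,
    Matrix.mulVec, dotProduct, Finset.mul_sum]
  exact Finset.sum_congr rfl fun j _ => by rw [Finset.sum_mul]; exact Finset.sum_congr rfl fun l _ => by ring

lemma quadForm_le {d : ℕ} (Q : Matrix (Fin d) (Fin d) ℝ) (v : EuclideanSpace ℝ (Fin d)) :
    quadForm Q v ≤ matOpNorm Q * ‖v‖ ^ 2 := by
  have h1 := real_inner_le_norm v (Matrix.toEuclideanCLM (𝕜 := ℝ) Q v)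
  have h2 := (Matrix.toEuclideanCLM (𝕜 := ℝ) Q).le_opNorm v
  have := norm_nonneg v
  unfold quadForm matOpNorm
  nlinarith [norm_nonneg (Matrix.toEuclideanCLM (𝕜 := ℝ) Q)]

lemma quadForm_sum {d m : ℕ} (Q : Fin m → Matrix (Fin d) (Fin d) ℝ)
    (v : EuclideanSpace ℝ (Fin d)) :
    quadForm (∑ i, Q i) v = ∑ i, quadForm (Q i) v := by
  unfold quadForm
  rw [map_sum]
  simp [ContinuousLinearMap.sum_apply, inner_sum]

lemma sc_min {E : Type*} [NormedAddCommGroup E] [InnerProductSpace ℝ E]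
    (f : E → ℝ) (μ : ℝ)
    (hconv : ConvexOn ℝ Set.univ (fun z => f z - μ/2 * ‖z‖^2))
    (xm : E) (hx : ∀ z, f xm ≤ f z) (z : E) :
    f xm + μ/2 * ‖z - xm‖^2 ≤ f z := by
  have key : ∀ t : ℝ, t ∈ Set.Ioo (0:ℝ) 1 → μ/2 * (1-t) * ‖z - xm‖^2 ≤ f z - f xm := by
    intro t ht
    obtain ⟨ht0, ht1⟩ := ht
    have hcomb := hconv.2 (Set.mem_univ xm) (Set.mem_univ z)
      (by linarith : (0:ℝ) ≤ 1 - t) ht0.le (by ring)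
    have hid : ‖(1-t)•xm + t•z‖^2 = (1-t)*‖xm‖^2 + t*‖z‖^2 - t*(1-t)*‖z-xm‖^2 := by
      simp only [← real_inner_self_eq_norm_sq]
      simp only [inner_add_left, inner_add_right, inner_sub_left, inner_sub_right,
        real_inner_smul_left, real_inner_smul_right, real_inner_comm xm z]
      ring
    have hmin := hx ((1-t)•xm + t•z)
    simp only [hid, smul_eq_mul] at hcomb
    nlinarith [mul_pos ht0 (sub_pos.mpr ht1)]
  have hc : Set.Ioo (0:ℝ) 1 ∈ nhdsWithin (0:ℝ) (Set.Ioi 0) :=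
    Ioo_mem_nhdsGT_of_mem (by constructor <;> norm_num)
  have htend : Filter.Tendsto (fun t : ℝ => μ/2 * (1-t) * ‖z - xm‖^2)
      (nhdsWithin (0:ℝ) (Set.Ioi 0)) (nhds (μ/2 * (1-0) * ‖z - xm‖^2)) := by
    apply Filter.Tendsto.mono_left _ nhdsWithin_le_nhds
    exact Continuous.tendsto (by continuity) 0
  have := le_of_tendsto htend (Filter.eventually_iff_exists_mem.mpr ⟨_, hc, key⟩)
  linarith

lemma convexOn_finset_sum {ι E : Type*} [AddCommGroup E] [Module ℝ E]
    (t : Finset ι) (f : ι → E → ℝ) (h : ∀ i ∈ t, ConvexOn ℝ Set.univ (f i)) :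
    ConvexOn ℝ Set.univ (fun z => ∑ i ∈ t, f i z) := by
  classical
  induction t using Finset.cons_induction with
  | empty => simpa using convexOn_const (0:ℝ) convex_univ
  | cons i s his ih =>
    simp only [Finset.sum_cons]
    exact (h i (Finset.mem_cons_self i s)).add
      (ih fun j hj => h j (Finset.mem_cons_of_mem hj))

set_option maxHeartbeats 2000000 in
/-- **Statement 13** (Theorem 1, distance bound). Under the CODER iteration with `F`
monotone and satisfying the blockwise Lipschitz assumption, if `x⋆` solves the
generalized Minty variational inequality
`⟨F(z), z − x⋆⟩ + g(z) − g(x⋆) ≥ 0` for all `z`, then for every `k ≥ 1`: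
`‖x_k − x⋆‖² ≤ (2/(1 + γA_k))‖x₀ − x⋆‖²`. -/
theorem stmt13 {d m : ℕ} (blk : Fin d → Fin m) (hblk : Monotone blk)
    (F : EuclideanSpace ℝ (Fin d) → EuclideanSpace ℝ (Fin d))
    (γ L : ℝ) (hγ : 0 ≤ γ) (hL : 0 < L)
    -- blockwise Lipschitz assumption
    (Q : Fin m → Matrix (Fin d) (Fin d) ℝ)
    (hpsd : ∀ i, (Q i).PosSemidef)
    (hlip : ∀ (i : Fin m) (z w : EuclideanSpace ℝ (Fin d)),
      ∑ j ∈ Finset.univ.filter (fun j => blk j = i), (F z j - F w j) ^ 2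
        ≤ quadForm (Q i) (z - w))
    (Qhat : Fin m → Matrix (Fin d) (Fin d) ℝ)
    (hQhat : ∀ (i : Fin m) (j k : Fin d),
      Qhat i j k = if i ≤ blk j ∧ i ≤ blk k then Q i j k else 0)
    (hL2 : L ^ 2 = matOpNorm (∑ i, Qhat i))
    -- the block components of the separable regularizer g
    (g : Fin m → EuclideanSpace ℝ (Fin d) → ℝ)
    (hgdep : ∀ (i : Fin m) (z w : EuclideanSpace ℝ (Fin d)),
      (∀ j, blk j = i → z j = w j) → g i z = g i w)
    (hgsc : ∀ i : Fin m, ConvexOn ℝ Set.univ (fun z : EuclideanSpace ℝ (Fin d) =>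
      g i z - γ / 2 * ∑ j ∈ Finset.univ.filter (fun j => blk j = i), (z j) ^ 2))
    (G : EuclideanSpace ℝ (Fin d) → ℝ) (hG : ∀ z, G z = ∑ i, g i z)
    -- step sizes
    (a A : ℕ → ℝ) (ha0 : a 0 = 0) (hA0 : A 0 = 0)
    (ha : ∀ k : ℕ, a (k + 1) = (1 + γ * A k) / (2 * L))
    (hA : ∀ k : ℕ, A (k + 1) = A k + a (k + 1))
    -- iterates, cyclic coordinate gradients, and extrapolated gradients
    (x p q : ℕ → EuclideanSpace ℝ (Fin d))
    (hp0 : p 0 = F (x 0))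
    (hp : ∀ (k : ℕ) (j : Fin d),
      p (k + 1) j = F (WithLp.toLp 2 (fun j' => if blk j' < blk j then x (k + 1) j' else x k j')) j)
    (hq : ∀ (k : ℕ) (j : Fin d),
      q (k + 1) j = p (k + 1) j + a k / a (k + 1) * (F (x k) j - p k j))
    -- estimation sequence and its minimization property
    (ψ : ℕ → EuclideanSpace ℝ (Fin d) → EuclideanSpace ℝ (Fin d) → ℝ)
    (hψ : ∀ (k : ℕ) (z u : EuclideanSpace ℝ (Fin d)),
      ψ k z u = ∑ j ∈ Finset.Icc 1 k, a j * (⟪q j, z - u⟫ + G z - G u)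
        + 1 / 2 * ‖z - x 0‖ ^ 2)
    -- monotonicity of F
    (hmonoF : ∀ z w : EuclideanSpace ℝ (Fin d), 0 ≤ ⟪F z - F w, z - w⟫)
    (hxmin : ∀ k : ℕ, 1 ≤ k → ∀ u z : EuclideanSpace ℝ (Fin d), ψ k (x k) u ≤ ψ k z u)
    -- a solution of the generalized Minty variational inequality
    (xstar : EuclideanSpace ℝ (Fin d))
    (hstar : ∀ z : EuclideanSpace ℝ (Fin d), 0 ≤ ⟪F z, z - xstar⟫ + G z - G xstar) :
    ∀ k : ℕ, 1 ≤ k →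
      ‖x k - xstar‖ ^ 2 ≤ 2 / (1 + γ * A k) * ‖x 0 - xstar‖ ^ 2 := by
  classical
  -- basic facts about step sizes
  have hApos : ∀ k, 0 ≤ A k := by
    intro k
    induction k with
    | zero => simp [hA0]
    | succ n ih =>
      have h1 : 0 < 1 + γ * A n := by nlinarith
      have : 0 < a (n+1) := by rw [ha]; positivity
      rw [hA]; linarith
  have hone : ∀ k, 0 < 1 + γ * A k := fun k => by nlinarith [hApos k]
  have hapos : ∀ k, 0 < a (k+1) := fun k => by
    rw [ha]; exact div_pos (hone k) (by linarith)
  have hanneg : ∀ k, 0 ≤ a k := by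
    intro k; cases k with
    | zero => simp [ha0]
    | succ n => exact (hapos n).le
  have hAsucc : ∀ k, A k ≤ A (k+1) := fun k => by rw [hA]; linarith [hapos k]
  have haL : ∀ k, a (k+1) * L = (1 + γ * A k) / 2 := by
    intro k; rw [ha]; field_simp
  have hAsum : ∀ k, A k = ∑ j ∈ Finset.Icc 1 k, a j := by
    intro k
    induction k with
    | zero => simp [hA0]
    | succ n ih =>
      rw [Finset.sum_Icc_succ_top (by omega), ← ih, hA]
  -- the potential function
  obtain ⟨φ, hφdef⟩ : ∃ φ : ℕ → EuclideanSpace ℝ (Fin d) → ℝ,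
      φ = fun k z => (∑ j ∈ Finset.Icc 1 k, a j * (⟪q j, z⟫ + G z)) + 1/2 * ‖z - x 0‖^2 :=
    ⟨_, rfl⟩
  have hψφ : ∀ k z u, ψ k z u = φ k z - ∑ j ∈ Finset.Icc 1 k, a j * (⟪q j, u⟫ + G u) := by
    intro k z u
    rw [hψ, hφdef]
    rw [show (∑ j ∈ Finset.Icc 1 k, a j * (⟪q j, z - u⟫ + G z - G u))
        = ∑ j ∈ Finset.Icc 1 k, (a j * (⟪q j, z⟫ + G z) - a j * (⟪q j, u⟫ + G u)) from
      Finset.sum_congr rfl fun j _ => by rw [inner_sub_right]; ring]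
    rw [Finset.sum_sub_distrib]
    ring
  have hφ0 : φ 0 (x 0) = 0 := by simp [hφdef]
  have hφmin : ∀ k, ∀ z, φ k (x k) ≤ φ k z := by
    intro k z
    cases k with
    | zero =>
      rw [hφ0]
      have : φ 0 z = 1/2 * ‖z - x 0‖^2 := by simp [hφdef]
      rw [this]; positivity
    | succ n =>
      have := hxmin (n+1) (by omega) z z
      rw [hψφ, hψφ] at this
      linarith
  -- convexity
  have hnormsq : ∀ z : EuclideanSpace ℝ (Fin d), ‖z‖^2 = ∑ j, (z j)^2 := by
    intro z
    rw [EuclideanSpace.norm_eq, Real.sq_sqrt (Finset.sum_nonneg fun _ _ => sq_nonneg _)]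
    simp [Real.norm_eq_abs, sq_abs]
  have hGconv : ConvexOn ℝ Set.univ (fun z : EuclideanSpace ℝ (Fin d) => G z - γ/2 * ‖z‖^2) := by
    have heq : (fun z : EuclideanSpace ℝ (Fin d) => G z - γ/2 * ‖z‖^2)
        = fun z => ∑ i, (g i z - γ/2 * ∑ j ∈ Finset.univ.filter (fun j => blk j = i), (z j)^2) := by
      funext z
      rw [Finset.sum_sub_distrib, ← hG, ← Finset.mul_sum, Finset.sum_fiberwise, hnormsq]
    rw [heq]
    exact convexOn_finset_sum _ _ fun i _ => hgsc i
  have hφconv : ∀ k, ConvexOn ℝ Set.univ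
      (fun z => φ k z - (1 + γ * A k)/2 * ‖z‖^2) := by
    intro k
    have heq : (fun z => φ k z - (1 + γ * A k)/2 * ‖z‖^2)
        = fun z => A k • (G z - γ/2 * ‖z‖^2) +
            (⟪(∑ j ∈ Finset.Icc 1 k, a j • q j) - x 0, z⟫ + 1/2 * ‖x 0‖^2) := by
      funext z
      have hsplit : (∑ j ∈ Finset.Icc 1 k, a j * (⟪q j, z⟫ + G z))
          = ⟪∑ j ∈ Finset.Icc 1 k, a j • q j, z⟫ + A k * G z := by
        rw [hAsum k, sum_inner, Finset.sum_mul, ← Finset.sum_add_distrib]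
        exact Finset.sum_congr rfl fun j _ => by rw [real_inner_smul_left]; ring
      have h1 : ‖z - x 0‖^2 = ‖z‖^2 - 2*⟪z, x 0⟫ + ‖x 0‖^2 := by
        rw [← real_inner_self_eq_norm_sq, ← real_inner_self_eq_norm_sq,
          ← real_inner_self_eq_norm_sq]
        simp only [inner_sub_left, inner_sub_right, real_inner_comm (x 0) z]
        ring
      simp only [hφdef]
      rw [hsplit, h1]
      simp only [inner_sub_left, smul_eq_mul, real_inner_comm (x 0) z]
      ring
    rw [heq]
    refine (hGconv.smul (hApos k)).add ?_
    refine ⟨convex_univ, ?_⟩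
    intro z _ w _ s t hs ht hst
    simp only [inner_add_right, real_inner_smul_right, smul_eq_mul]
    nlinarith [hst]
  -- strong convexity gap at the minimizer
  have hgap : ∀ k z, φ k (x k) + (1 + γ * A k)/2 * ‖z - x k‖^2 ≤ φ k z :=
    fun k z => sc_min (φ k) (1 + γ * A k) (hφconv k) (x k) (hφmin k) z
  -- Lipschitz error bound
  have he : ∀ k, ‖F (x (k+1)) - p (k+1)‖ ≤ L * ‖x (k+1) - x k‖ := by
    intro k
    have hv2 : ‖F (x (k+1)) - p (k+1)‖^2 = ∑ j, (F (x (k+1)) j - p (k+1) j)^2 := by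
      rw [hnormsq]
      exact Finset.sum_congr rfl fun j _ => by simp
    have hbi : ∀ i : Fin m,
        ∑ j ∈ Finset.univ.filter (fun j => blk j = i), (F (x (k+1)) j - p (k+1) j)^2
          ≤ quadForm (Qhat i) (x (k+1) - x k) := by
      intro i
      set w : EuclideanSpace ℝ (Fin d) :=
        WithLp.toLp 2 (fun j' => if blk j' < i then x (k+1) j' else x k j') with hw
      have h1 : ∑ j ∈ Finset.univ.filter (fun j => blk j = i),
            (F (x (k+1)) j - p (k+1) j)^2
          = ∑ j ∈ Finset.univ.filter (fun j => blk j = i),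
            (F (x (k+1)) j - F w j)^2 := by
        refine Finset.sum_congr rfl fun j hj => ?_
        have hji : blk j = i := (Finset.mem_filter.mp hj).2
        rw [hp k j, hji]
      rw [h1]
      refine le_trans (hlip i (x (k+1)) w) (le_of_eq ?_)
      rw [quadForm_eq, quadForm_eq]
      refine Finset.sum_congr rfl fun j _ => Finset.sum_congr rfl fun l _ => ?_
      have happ : ∀ j' : Fin d, (x (k+1) - w) j'
          = if i ≤ blk j' then (x (k+1) - x k) j' else 0 := by
        intro j'
        by_cases hc : blk j' < i
        · simp [hw, hc, not_le.mpr hc]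
        · simp [hw, hc, not_lt.mp hc]
      rw [happ j, happ l, hQhat i j l]
      by_cases hcj : i ≤ blk j <;> by_cases hcl : i ≤ blk l <;>
        simp [hcj, hcl]
    have hsum : ‖F (x (k+1)) - p (k+1)‖^2 ≤ L^2 * ‖x (k+1) - x k‖^2 := by
      rw [hv2, ← Finset.sum_fiberwise Finset.univ blk
        (fun j => (F (x (k+1)) j - p (k+1) j)^2)]
      calc ∑ i : Fin m, ∑ j ∈ Finset.univ.filter (fun j => blk j = i),
              (F (x (k+1)) j - p (k+1) j)^2
          ≤ ∑ i : Fin m, quadForm (Qhat i) (x (k+1) - x k) :=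
            Finset.sum_le_sum fun i _ => hbi i
        _ = quadForm (∑ i, Qhat i) (x (k+1) - x k) := (quadForm_sum _ _).symm
        _ ≤ matOpNorm (∑ i, Qhat i) * ‖x (k+1) - x k‖^2 := quadForm_le _ _
        _ = L^2 * ‖x (k+1) - x k‖^2 := by rw [hL2]
    nlinarith [norm_nonneg (F (x (k+1)) - p (k+1)), norm_nonneg (x (k+1) - x k),
      mul_nonneg hL.le (norm_nonneg (x (k+1) - x k))]
  -- B-induction: lower bound on the potential at the iterate
  have hB : ∀ k, (∑ j ∈ Finset.Icc 1 k, (a j * (⟪q j, x j⟫ + G (x j))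
      + (1 + γ * A (j-1))/2 * ‖x j - x (j-1)‖^2)) ≤ φ k (x k) := by
    intro k
    induction k with
    | zero => rw [hφ0]; simp
    | succ n ih =>
      rw [Finset.sum_Icc_succ_top (by omega)]
      simp only [Nat.add_sub_cancel]
      have hgap' := hgap n (x (n+1))
      have hφsucc : φ (n+1) (x (n+1)) = φ n (x (n+1))
          + a (n+1) * (⟪q (n+1), x (n+1)⟫ + G (x (n+1))) := by
        simp only [hφdef]
        rw [Finset.sum_Icc_succ_top (by omega)]
        ring
      linarith
  -- telescoping identity for the extrapolation error
  have hE : ∀ k, ∑ j ∈ Finset.Icc 1 k, a j * ⟪F (x j) - q j, x j - xstar⟫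
      = a k * ⟪F (x k) - p k, x k - xstar⟫
        - ∑ j ∈ Finset.Icc 1 k, a (j-1) * ⟪F (x (j-1)) - p (j-1), x j - x (j-1)⟫ := by
    intro k
    induction k with
    | zero => simp [ha0]
    | succ n ih =>
      rw [Finset.sum_Icc_succ_top (by omega), Finset.sum_Icc_succ_top (by omega), ih]
      have hvec : F (x (n+1)) - q (n+1)
          = (F (x (n+1)) - p (n+1)) - (a n / a (n+1)) • (F (x n) - p n) := by
        ext j
        simp [hq n j]
        ring
      have hne : a (n+1) ≠ 0 := (hapos n).ne'
      have hkey : a (n+1) * ⟪F (x (n+1)) - q (n+1), x (n+1) - xstar⟫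
          = a (n+1) * ⟪F (x (n+1)) - p (n+1), x (n+1) - xstar⟫
            - a n * ⟪F (x n) - p n, x (n+1) - xstar⟫ := by
        rw [hvec, inner_sub_left, real_inner_smul_left]
        field_simp
      have hsplit : ⟪F (x n) - p n, x (n+1) - xstar⟫
          = ⟪F (x n) - p n, x (n+1) - x n⟫ + ⟪F (x n) - p n, x n - xstar⟫ := by
        rw [← inner_add_right]
        congr 1
        abel
      simp only [Nat.add_sub_cancel]
      rw [hkey, hsplit]
      ring
  -- bound on the correction sum
  have hC : ∀ k, 1 ≤ k →
      |∑ j ∈ Finset.Icc 1 k, a (j-1) * ⟪F (x (j-1)) - p (j-1), x j - x (j-1)⟫|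
        ≤ (∑ j ∈ Finset.Icc 1 k, (1 + γ * A (j-1))/2 * ‖x j - x (j-1)‖^2)
          - (1 + γ * A (k-1))/4 * ‖x k - x (k-1)‖^2 := by
    intro k hk
    induction k, hk using Nat.le_induction with
    | base =>
      rw [Finset.Icc_self, Finset.sum_singleton, Finset.sum_singleton]
      simp only [Nat.sub_self]
      rw [ha0]
      simp only [zero_mul, abs_zero]
      have := hone 0
      nlinarith [sq_nonneg ‖x 1 - x 0‖]
    | succ n hn ih =>
      obtain ⟨n', rfl⟩ : ∃ n'', n = n'' + 1 := ⟨n - 1, by omega⟩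
      simp only [Nat.add_sub_cancel] at ih
      rw [Finset.sum_Icc_succ_top (show 1 ≤ n'+1+1 by omega)
            (f := fun j => a (j-1) * ⟪F (x (j-1)) - p (j-1), x j - x (j-1)⟫),
          Finset.sum_Icc_succ_top (show 1 ≤ n'+1+1 by omega)
            (f := fun j => (1 + γ * A (j-1))/2 * ‖x j - x (j-1)‖^2)]
      simp only [Nat.add_sub_cancel]
      have habs : |(∑ j ∈ Finset.Icc 1 (n'+1),
              a (j-1) * ⟪F (x (j-1)) - p (j-1), x j - x (j-1)⟫)
            + a (n'+1) * ⟪F (x (n'+1)) - p (n'+1), x (n'+1+1) - x (n'+1)⟫|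
          ≤ |∑ j ∈ Finset.Icc 1 (n'+1),
              a (j-1) * ⟪F (x (j-1)) - p (j-1), x j - x (j-1)⟫|
            + a (n'+1) * (‖F (x (n'+1)) - p (n'+1)‖ * ‖x (n'+1+1) - x (n'+1)‖) := by
        refine le_trans (abs_add_le _ _) ?_
        have h2 : |a (n'+1) * ⟪F (x (n'+1)) - p (n'+1), x (n'+1+1) - x (n'+1)⟫|
            ≤ a (n'+1) * (‖F (x (n'+1)) - p (n'+1)‖ * ‖x (n'+1+1) - x (n'+1)‖) := by
          rw [abs_mul, abs_of_nonneg (hanneg (n'+1))]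
          exact mul_le_mul_of_nonneg_left (abs_real_inner_le_norm _ _) (hanneg _)
        linarith
      have s2 : a (n'+1) * (‖F (x (n'+1)) - p (n'+1)‖ * ‖x (n'+1+1) - x (n'+1)‖)
          ≤ a (n'+1) * ((L * ‖x (n'+1) - x n'‖) * ‖x (n'+1+1) - x (n'+1)‖) :=
        mul_le_mul_of_nonneg_left
          (mul_le_mul_of_nonneg_right (he n') (norm_nonneg _)) (hanneg _)
      have s3 : a (n'+1) * ((L * ‖x (n'+1) - x n'‖) * ‖x (n'+1+1) - x (n'+1)‖)
          = (1 + γ * A n')/2 * (‖x (n'+1) - x n'‖ * ‖x (n'+1+1) - x (n'+1)‖) := by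
        rw [← haL n']
        ring
      have s4 : (1 + γ * A n')/2 * (‖x (n'+1) - x n'‖ * ‖x (n'+1+1) - x (n'+1)‖)
          ≤ (1 + γ * A n')/4 * ‖x (n'+1) - x n'‖^2
            + (1 + γ * A n')/4 * ‖x (n'+1+1) - x (n'+1)‖^2 := by
        nlinarith [sq_nonneg (‖x (n'+1) - x n'‖ - ‖x (n'+1+1) - x (n'+1)‖), hone n']
      have s5 : (1 + γ * A n') ≤ (1 + γ * A (n'+1)) := by
        have := mul_le_mul_of_nonneg_left (hAsucc n') hγ
        linarith
      have s6 : (1 + γ * A n')/4 * ‖x (n'+1+1) - x (n'+1)‖^2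
          ≤ (1 + γ * A (n'+1))/4 * ‖x (n'+1+1) - x (n'+1)‖^2 := by
        nlinarith [sq_nonneg ‖x (n'+1+1) - x (n'+1)‖]
      linarith
  -- final assembly
  intro k hk
  obtain ⟨k', rfl⟩ : ∃ k'', k = k'' + 1 := ⟨k - 1, by omega⟩
  have hS : (0:ℝ) ≤ ∑ j ∈ Finset.Icc 1 (k'+1),
      a j * (⟪F (x j), x j - xstar⟫ + G (x j) - G xstar) :=
    Finset.sum_nonneg fun j _ => mul_nonneg (hanneg j) (hstar (x j))
  have hdecomp : ∑ j ∈ Finset.Icc 1 (k'+1),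
        a j * (⟪F (x j), x j - xstar⟫ + G (x j) - G xstar)
      = (∑ j ∈ Finset.Icc 1 (k'+1), (a j * (⟪q j, x j⟫ + G (x j))
          + (1 + γ * A (j-1))/2 * ‖x j - x (j-1)‖^2))
        - (∑ j ∈ Finset.Icc 1 (k'+1), (1 + γ * A (j-1))/2 * ‖x j - x (j-1)‖^2)
        - (∑ j ∈ Finset.Icc 1 (k'+1), a j * (⟪q j, xstar⟫ + G xstar))
        + (∑ j ∈ Finset.Icc 1 (k'+1), a j * ⟪F (x j) - q j, x j - xstar⟫) := by
    rw [show (∑ j ∈ Finset.Icc 1 (k'+1),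
          a j * (⟪F (x j), x j - xstar⟫ + G (x j) - G xstar))
        = ∑ j ∈ Finset.Icc 1 (k'+1), ((a j * (⟪q j, x j⟫ + G (x j))
            + (1 + γ * A (j-1))/2 * ‖x j - x (j-1)‖^2)
          - (1 + γ * A (j-1))/2 * ‖x j - x (j-1)‖^2
          - a j * (⟪q j, xstar⟫ + G xstar)
          + a j * ⟪F (x j) - q j, x j - xstar⟫) from
      Finset.sum_congr rfl fun j _ => by
        simp only [inner_sub_left, inner_sub_right]
        ring]
    simp only [Finset.sum_add_distrib, Finset.sum_sub_distrib]
  have hqu : ∑ j ∈ Finset.Icc 1 (k'+1), a j * (⟪q j, xstar⟫ + G xstar)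
      = φ (k'+1) xstar - 1/2 * ‖xstar - x 0‖^2 := by
    simp only [hφdef]
    ring
  have hgapu := hgap (k'+1) xstar
  have hEk := hE (k'+1)
  have hCk := hC (k'+1) (by omega)
  simp only [Nat.add_sub_cancel] at hCk
  have hBk := hB (k'+1)
  -- bound the boundary term
  have h1 : a (k'+1) * ⟪F (x (k'+1)) - p (k'+1), x (k'+1) - xstar⟫
      ≤ (1 + γ * A k')/4 * ‖x (k'+1) - x k'‖^2
        + (1 + γ * A k')/4 * ‖x (k'+1) - xstar‖^2 := by
    have s1 : a (k'+1) * ⟪F (x (k'+1)) - p (k'+1), x (k'+1) - xstar⟫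
        ≤ a (k'+1) * (‖F (x (k'+1)) - p (k'+1)‖ * ‖x (k'+1) - xstar‖) :=
      mul_le_mul_of_nonneg_left (real_inner_le_norm _ _) (hanneg _)
    have s2 : a (k'+1) * (‖F (x (k'+1)) - p (k'+1)‖ * ‖x (k'+1) - xstar‖)
        ≤ a (k'+1) * ((L * ‖x (k'+1) - x k'‖) * ‖x (k'+1) - xstar‖) :=
      mul_le_mul_of_nonneg_left
        (mul_le_mul_of_nonneg_right (he k') (norm_nonneg _)) (hanneg _)
    have s3 : a (k'+1) * ((L * ‖x (k'+1) - x k'‖) * ‖x (k'+1) - xstar‖)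
        = (1 + γ * A k')/2 * (‖x (k'+1) - x k'‖ * ‖x (k'+1) - xstar‖) := by
      rw [← haL k']
      ring
    have s4 : (1 + γ * A k')/2 * (‖x (k'+1) - x k'‖ * ‖x (k'+1) - xstar‖)
        ≤ (1 + γ * A k')/4 * ‖x (k'+1) - x k'‖^2
          + (1 + γ * A k')/4 * ‖x (k'+1) - xstar‖^2 := by
      nlinarith [sq_nonneg (‖x (k'+1) - x k'‖ - ‖x (k'+1) - xstar‖), hone k']
    linarith
  have s5 : (1 + γ * A k') ≤ (1 + γ * A (k'+1)) := by
    have := mul_le_mul_of_nonneg_left (hAsucc k') hγ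
    linarith
  have s6 : (1 + γ * A k')/4 * ‖x (k'+1) - xstar‖^2
      ≤ (1 + γ * A (k'+1))/4 * ‖x (k'+1) - xstar‖^2 := by
    nlinarith [sq_nonneg ‖x (k'+1) - xstar‖]
  have hrev1 : ‖xstar - x (k'+1)‖ = ‖x (k'+1) - xstar‖ := norm_sub_rev _ _
  have hrev2 : ‖xstar - x 0‖ = ‖x 0 - xstar‖ := norm_sub_rev _ _
  rw [hrev1] at hgapu
  rw [hrev2] at hqu
  have habs' : -(∑ j ∈ Finset.Icc 1 (k'+1),
        a (j-1) * ⟪F (x (j-1)) - p (j-1), x j - x (j-1)⟫)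
      ≤ (∑ j ∈ Finset.Icc 1 (k'+1), (1 + γ * A (j-1))/2 * ‖x j - x (j-1)‖^2)
        - (1 + γ * A k')/4 * ‖x (k'+1) - x k'‖^2 :=
    le_trans (neg_le_abs _) hCk
  have hfinal : (1 + γ * A (k'+1))/4 * ‖x (k'+1) - xstar‖^2
      ≤ 1/2 * ‖x 0 - xstar‖^2 := by
    rw [hdecomp, hEk, hqu] at hS
    linarith
  have hpos := hone (k'+1)
  rw [div_mul_eq_mul_div, le_div_iff₀ hpos]
  nlinarith
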